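/- arXiv:2409.03739 — 3 statements merged into one kernel-verified Lean document; each statement's English description precedes it below -/
import Mathlib

section
/- If N ∈ cut_d(m₁,m₂) and α, η_A, η_B ∈ [0,1], and P ∈ cut_d(m₁,m₂) has underlying vectors a_x, b_y such that η_A·S^{d-1} ⊆ conv{a_x} and η_B·S^{d-1} ⊆ conv{b_y} and α·P ∈ cut_n(m₁,m₂), then α·η_A·η_B·N ∈ cut_n(m₁,m₂). Consequently, for every real matrix M, α·η_A·η_B·SDP_d(M) ≤ SDP_n(M). -/
/-- `SDP k m₁ m₂ M` is the maximum of `∑ x y, M x y * ⟨a x, b y⟩` over families of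
unit vectors `a x`, `b y` in the unit sphere of `ℝ^k`. -/
noncomputable def SDP (k m₁ m₂ : ℕ) (M : Matrix (Fin m₁) (Fin m₂) ℝ) : ℝ :=
  sSup { r : ℝ | ∃ (a : Fin m₁ → EuclideanSpace ℝ (Fin k)) (b : Fin m₂ → EuclideanSpace ℝ (Fin k)),
    (∀ x, ‖a x‖ = 1) ∧ (∀ y, ‖b y‖ = 1) ∧
    r = ∑ x, ∑ y, M x y * (inner ℝ (a x) (b y) : ℝ) }

/-- `cut k m₁ m₂` is the convex hull of the matrices of inner products of families of
unit vectors in `ℝ^k`. -/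
noncomputable def cut (k m₁ m₂ : ℕ) : Set (Matrix (Fin m₁) (Fin m₂) ℝ) :=
  convexHull ℝ { X | ∃ (a : Fin m₁ → EuclideanSpace ℝ (Fin k)) (b : Fin m₂ → EuclideanSpace ℝ (Fin k)),
    (∀ x, ‖a x‖ = 1) ∧ (∀ y, ‖b y‖ = 1) ∧
    ∀ x y, X x y = (inner ℝ (a x) (b y) : ℝ) }

namespace ShrinkAux

open Finset

/-- The generating set of `cut`. -/
def cutGen (k m₁ m₂ : ℕ) : Set (Matrix (Fin m₁) (Fin m₂) ℝ) :=
  { X | ∃ (a : Fin m₁ → EuclideanSpace ℝ (Fin k)) (b : Fin m₂ → EuclideanSpace ℝ (Fin k)),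
    (∀ x, ‖a x‖ = 1) ∧ (∀ y, ‖b y‖ = 1) ∧
    ∀ x y, X x y = (inner ℝ (a x) (b y) : ℝ) }

lemma cut_eq (k m₁ m₂ : ℕ) : cut k m₁ m₂ = convexHull ℝ (cutGen k m₁ m₂) := rfl

/-- The set over which `SDP` takes a supremum. -/
def sdpSet (k m₁ m₂ : ℕ) (M : Matrix (Fin m₁) (Fin m₂) ℝ) : Set ℝ :=
  { r : ℝ | ∃ (a : Fin m₁ → EuclideanSpace ℝ (Fin k)) (b : Fin m₂ → EuclideanSpace ℝ (Fin k)),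
    (∀ x, ‖a x‖ = 1) ∧ (∀ y, ‖b y‖ = 1) ∧
    r = ∑ x, ∑ y, M x y * (inner ℝ (a x) (b y) : ℝ) }

lemma SDP_eq (k m₁ m₂ : ℕ) (M : Matrix (Fin m₁) (Fin m₂) ℝ) :
    SDP k m₁ m₂ M = sSup (sdpSet k m₁ m₂ M) := rfl

variable {k m₁ m₂ : ℕ}

lemma bddAbove_sdpSet (k m₁ m₂ : ℕ) (M : Matrix (Fin m₁) (Fin m₂) ℝ) :
    BddAbove (sdpSet k m₁ m₂ M) := by
  refine ⟨∑ x, ∑ y, |M x y|, ?_⟩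
  rintro r ⟨a, b, ha, hb, rfl⟩
  refine Finset.sum_le_sum fun x _ => Finset.sum_le_sum fun y _ => ?_
  calc M x y * (inner ℝ (a x) (b y) : ℝ) ≤ |M x y * (inner ℝ (a x) (b y) : ℝ)| := le_abs_self _
    _ = |M x y| * |(inner ℝ (a x) (b y) : ℝ)| := abs_mul _ _
    _ ≤ |M x y| * 1 := by
        refine mul_le_mul_of_nonneg_left ?_ (abs_nonneg _)
        calc |(inner ℝ (a x) (b y) : ℝ)| ≤ ‖a x‖ * ‖b y‖ := abs_real_inner_le_norm _ _
          _ = 1 := by rw [ha, hb, mul_one]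
    _ = |M x y| := mul_one _

/-- Decomposition of a vector of norm at most 1 as a convex combination of two unit vectors. -/
lemma decomp (u : EuclideanSpace ℝ (Fin k)) (hu : ‖u‖ = 1)
    (v : EuclideanSpace ℝ (Fin k)) (hv : ‖v‖ ≤ 1) :
    ∃ (θ : ℝ) (p q : EuclideanSpace ℝ (Fin k)), 0 ≤ θ ∧ θ ≤ 1 ∧ ‖p‖ = 1 ∧ ‖q‖ = 1 ∧
      v = θ • p + (1 - θ) • q := by
  by_cases h : v = 0
  · refine ⟨1/2, u, -u, by norm_num, by norm_num, hu, by simpa using hu, ?_⟩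
    subst h
    module
  · have hv0 : 0 < ‖v‖ := norm_pos_iff.2 h
    refine ⟨(1 + ‖v‖)/2, ‖v‖⁻¹ • v, -(‖v‖⁻¹ • v), by linarith, by linarith, ?_, ?_, ?_⟩
    · rw [norm_smul, Real.norm_eq_abs, abs_inv, abs_norm, inv_mul_cancel₀ hv0.ne']
    · rw [norm_neg, norm_smul, Real.norm_eq_abs, abs_inv, abs_norm, inv_mul_cancel₀ hv0.ne']
    · have : ((1 + ‖v‖)/2) • (‖v‖⁻¹ • v) + (1 - (1 + ‖v‖)/2) • -(‖v‖⁻¹ • v)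
          = ‖v‖ • ‖v‖⁻¹ • v := by module
      rw [this, smul_smul, mul_inv_cancel₀ hv0.ne', one_smul]

lemma row_relax (hu : ∃ u : EuclideanSpace ℝ (Fin k), ‖u‖ = 1)
    (e : Fin m₂ → EuclideanSpace ℝ (Fin k)) (he : ∀ y, ‖e y‖ = 1)
    (S : Finset (Fin m₁)) :
    ∀ c : Fin m₁ → EuclideanSpace ℝ (Fin k), (∀ x, ‖c x‖ ≤ 1) → (∀ x ∉ S, ‖c x‖ = 1) →
    (Matrix.of fun x y => (inner ℝ (c x) (e y) : ℝ)) ∈ cut k m₁ m₂ := by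
  classical
  induction S using Finset.induction_on with
  | empty =>
    intro c _ hc1
    exact subset_convexHull ℝ _
      ⟨c, e, fun x => hc1 x (Finset.notMem_empty x), he, fun x y => rfl⟩
  | insert x₀ S hx₀ IH =>
    intro c hc hc1
    obtain ⟨u, hu1⟩ := hu
    obtain ⟨θ, p, q, hθ0, hθ1, hp, hq, hdec⟩ := decomp u hu1 (c x₀) (hc x₀)
    set cp := Function.update c x₀ p with hcp_def
    set cq := Function.update c x₀ q with hcq_def
    have hcpx₀ : cp x₀ = p := Function.update_self x₀ p c
    have hcqx₀ : cq x₀ = q := Function.update_self x₀ q c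
    have hcp_ne : ∀ x, x ≠ x₀ → cp x = c x := fun x hx => Function.update_of_ne hx p c
    have hcq_ne : ∀ x, x ≠ x₀ → cq x = c x := fun x hx => Function.update_of_ne hx q c
    have Hp : (Matrix.of fun x y => (inner ℝ (cp x) (e y) : ℝ)) ∈ cut k m₁ m₂ := by
      refine IH cp (fun x => ?_) (fun x hx => ?_)
      · rcases eq_or_ne x x₀ with h | h
        · rw [h, hcpx₀, hp]
        · rw [hcp_ne x h]; exact hc x
      · rcases eq_or_ne x x₀ with h | h
        · rw [h, hcpx₀]; exact hp
        · rw [hcp_ne x h]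
          exact hc1 x (by simp [Finset.mem_insert, h, hx])
    have Hq : (Matrix.of fun x y => (inner ℝ (cq x) (e y) : ℝ)) ∈ cut k m₁ m₂ := by
      refine IH cq (fun x => ?_) (fun x hx => ?_)
      · rcases eq_or_ne x x₀ with h | h
        · rw [h, hcqx₀, hq]
        · rw [hcq_ne x h]; exact hc x
      · rcases eq_or_ne x x₀ with h | h
        · rw [h, hcqx₀]; exact hq
        · rw [hcq_ne x h]
          exact hc1 x (by simp [Finset.mem_insert, h, hx])
    have key : (Matrix.of fun x y => (inner ℝ (c x) (e y) : ℝ)) =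
        θ • (Matrix.of fun x y => (inner ℝ (cp x) (e y) : ℝ)) +
        (1 - θ) • (Matrix.of fun x y => (inner ℝ (cq x) (e y) : ℝ)) := by
      ext x y
      simp only [Matrix.add_apply, Matrix.smul_apply, Matrix.of_apply, smul_eq_mul]
      rcases eq_or_ne x x₀ with h | h
      · rw [h, hcpx₀, hcqx₀, hdec, inner_add_left, real_inner_smul_left, real_inner_smul_left]
      · rw [hcp_ne x h, hcq_ne x h]; ring
    rw [key]
    exact (convex_convexHull ℝ _) Hp Hq hθ0 (by linarith) (by ring)

lemma col_relax (hu : ∃ u : EuclideanSpace ℝ (Fin k), ‖u‖ = 1)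
    (T : Finset (Fin m₂)) :
    ∀ (c : Fin m₁ → EuclideanSpace ℝ (Fin k)) (e : Fin m₂ → EuclideanSpace ℝ (Fin k)),
    (∀ x, ‖c x‖ ≤ 1) → (∀ y, ‖e y‖ ≤ 1) → (∀ y ∉ T, ‖e y‖ = 1) →
    (Matrix.of fun x y => (inner ℝ (c x) (e y) : ℝ)) ∈ cut k m₁ m₂ := by
  classical
  induction T using Finset.induction_on with
  | empty =>
    intro c e hc _ he1
    exact row_relax hu e (fun y => he1 y (Finset.notMem_empty y)) Finset.univ c hc
      (fun x hx => absurd (Finset.mem_univ x) hx)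
  | insert y₀ T hy₀ IH =>
    intro c e hc he he1
    obtain ⟨u, hu1⟩ := hu
    obtain ⟨θ, p, q, hθ0, hθ1, hp, hq, hdec⟩ := decomp u hu1 (e y₀) (he y₀)
    set ep := Function.update e y₀ p with hep_def
    set eq' := Function.update e y₀ q with heq_def
    have hepy₀ : ep y₀ = p := Function.update_self y₀ p e
    have heqy₀ : eq' y₀ = q := Function.update_self y₀ q e
    have hep_ne : ∀ y, y ≠ y₀ → ep y = e y := fun y hy => Function.update_of_ne hy p e
    have heq_ne : ∀ y, y ≠ y₀ → eq' y = e y := fun y hy => Function.update_of_ne hy q e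
    have Hp : (Matrix.of fun x y => (inner ℝ (c x) (ep y) : ℝ)) ∈ cut k m₁ m₂ := by
      refine IH c ep hc (fun y => ?_) (fun y hy => ?_)
      · rcases eq_or_ne y y₀ with h | h
        · rw [h, hepy₀, hp]
        · rw [hep_ne y h]; exact he y
      · rcases eq_or_ne y y₀ with h | h
        · rw [h, hepy₀]; exact hp
        · rw [hep_ne y h]
          exact he1 y (by simp [Finset.mem_insert, h, hy])
    have Hq : (Matrix.of fun x y => (inner ℝ (c x) (eq' y) : ℝ)) ∈ cut k m₁ m₂ := by
      refine IH c eq' hc (fun y => ?_) (fun y hy => ?_)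
      · rcases eq_or_ne y y₀ with h | h
        · rw [h, heqy₀, hq]
        · rw [heq_ne y h]; exact he y
      · rcases eq_or_ne y y₀ with h | h
        · rw [h, heqy₀]; exact hq
        · rw [heq_ne y h]
          exact he1 y (by simp [Finset.mem_insert, h, hy])
    have key : (Matrix.of fun x y => (inner ℝ (c x) (e y) : ℝ)) =
        θ • (Matrix.of fun x y => (inner ℝ (c x) (ep y) : ℝ)) +
        (1 - θ) • (Matrix.of fun x y => (inner ℝ (c x) (eq' y) : ℝ)) := by
      ext x y
      simp only [Matrix.add_apply, Matrix.smul_apply, Matrix.of_apply, smul_eq_mul]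
      rcases eq_or_ne y y₀ with h | h
      · rw [h, hepy₀, heqy₀, hdec, inner_add_right, real_inner_smul_right,
          real_inner_smul_right]
      · rw [hep_ne y h, heq_ne y h]; ring
    rw [key]
    exact (convex_convexHull ℝ _) Hp Hq hθ0 (by linarith) (by ring)

/-- A Gram-type matrix of vectors of norm at most 1 lies in `cut`. -/
lemma gram_mem (hu : ∃ u : EuclideanSpace ℝ (Fin k), ‖u‖ = 1)
    (c : Fin m₁ → EuclideanSpace ℝ (Fin k)) (e : Fin m₂ → EuclideanSpace ℝ (Fin k))
    (hc : ∀ x, ‖c x‖ ≤ 1) (he : ∀ y, ‖e y‖ ≤ 1) :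
    (Matrix.of fun x y => (inner ℝ (c x) (e y) : ℝ)) ∈ cut k m₁ m₂ :=
  col_relax hu Finset.univ c e hc he (fun y hy => absurd (Finset.mem_univ y) hy)

/-- Membership in the convex hull of the range of a finite family is witnessed by weights. -/
lemma exists_weights {m : ℕ} (a : Fin m → EuclideanSpace ℝ (Fin k))
    (x : EuclideanSpace ℝ (Fin k)) (hx : x ∈ convexHull ℝ (Set.range a)) :
    ∃ w : Fin m → ℝ, (∀ i, 0 ≤ w i) ∧ ∑ i, w i = 1 ∧ ∑ i, w i • a i = x := by
  classical
  rw [_root_.convexHull_eq] at hx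
  obtain ⟨ι, t, w, z, hw0, hw1, hz, hcm⟩ := hx
  have hne : t.Nonempty := by
    by_contra h
    rw [Finset.not_nonempty_iff_eq_empty] at h
    subst h
    simp at hw1
  have hm : Nonempty (Fin m) := by
    obtain ⟨i0, hi0⟩ := hne
    obtain ⟨j, -⟩ := hz i0 hi0
    exact ⟨j⟩
  let g : ι → Fin m := fun i => if h : ∃ j, a j = z i then h.choose else hm.some
  have hg : ∀ i ∈ t, a (g i) = z i := by
    intro i hi
    have h : ∃ j, a j = z i := hz i hi
    simp only [g, dif_pos h]
    exact h.choose_spec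
  refine ⟨fun j => ∑ i ∈ t, if g i = j then w i else 0, ?_, ?_, ?_⟩
  · intro j
    exact Finset.sum_nonneg fun i hi => by
      split
      · exact hw0 i hi
      · rfl
  · rw [Finset.sum_comm]
    rw [← hw1]
    refine Finset.sum_congr rfl fun i hi => ?_
    simp
  · rw [← hcm, Finset.centerMass_eq_of_sum_1 _ _ hw1]
    have : ∀ j, (∑ i ∈ t, if g i = j then w i else 0) • a j
        = ∑ i ∈ t, if g i = j then w i • a j else 0 := by
      intro j
      rw [Finset.sum_smul]
      exact Finset.sum_congr rfl fun i _ => by split <;> simp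
    simp_rw [this]
    rw [Finset.sum_comm]
    refine Finset.sum_congr rfl fun i hi => ?_
    rw [← hg i hi]
    simp

/-- `cut` is closed under row/column stochastic mixing. -/
lemma mixing (hu : ∃ u : EuclideanSpace ℝ (Fin k), ‖u‖ = 1)
    (lam : Fin m₁ → Fin m₁ → ℝ) (mu : Fin m₂ → Fin m₂ → ℝ)
    (hlam0 : ∀ x i, 0 ≤ lam x i) (hlam1 : ∀ x, ∑ i, lam x i = 1)
    (hmu0 : ∀ y j, 0 ≤ mu y j) (hmu1 : ∀ y, ∑ j, mu y j = 1)
    {Q : Matrix (Fin m₁) (Fin m₂) ℝ} (hQ : Q ∈ cut k m₁ m₂) :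
    (Matrix.of fun x y => ∑ i, ∑ j, lam x i * mu y j * Q i j) ∈ cut k m₁ m₂ := by
  let T : Matrix (Fin m₁) (Fin m₂) ℝ →ₗ[ℝ] Matrix (Fin m₁) (Fin m₂) ℝ :=
    { toFun := fun Q => Matrix.of fun x y => ∑ i, ∑ j, lam x i * mu y j * Q i j
      map_add' := by
        intro A B
        ext x y
        simp only [Matrix.add_apply, Matrix.of_apply, mul_add]
        rw [← Finset.sum_add_distrib]
        exact Finset.sum_congr rfl fun i _ => by rw [← Finset.sum_add_distrib]
      map_smul' := by
        intro r A
        ext x y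
        simp only [Matrix.smul_apply, Matrix.of_apply, smul_eq_mul, RingHom.id_apply]
        rw [Finset.mul_sum]
        refine Finset.sum_congr rfl fun i _ => ?_
        rw [Finset.mul_sum]
        exact Finset.sum_congr rfl fun j _ => by ring }
  have hsub : cut k m₁ m₂ ⊆ T ⁻¹' (cut k m₁ m₂) := by
    rw [cut_eq]
    refine convexHull_min ?_ ((convex_convexHull ℝ _).linear_preimage T)
    rintro X ⟨c, e, hc, he, hX⟩
    show T X ∈ cut k m₁ m₂
    have hTX : T X = Matrix.of fun x y =>
        (inner ℝ (∑ i, lam x i • c i) (∑ j, mu y j • e j) : ℝ) := by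
      ext x y
      show ∑ i, ∑ j, lam x i * mu y j * X i j
          = (inner ℝ (∑ i, lam x i • c i) (∑ j, mu y j • e j) : ℝ)
      rw [sum_inner]
      refine Finset.sum_congr rfl fun i _ => ?_
      rw [real_inner_smul_left, inner_sum, Finset.mul_sum]
      refine Finset.sum_congr rfl fun j _ => ?_
      rw [real_inner_smul_right, hX]
      ring
    rw [hTX]
    refine gram_mem hu _ _ (fun x => ?_) (fun y => ?_)
    · calc ‖∑ i, lam x i • c i‖ ≤ ∑ i, ‖lam x i • c i‖ := norm_sum_le _ _
        _ = ∑ i, lam x i := by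
            refine Finset.sum_congr rfl fun i _ => ?_
            rw [norm_smul, hc i, mul_one, Real.norm_eq_abs, abs_of_nonneg (hlam0 x i)]
        _ = 1 := hlam1 x
    · calc ‖∑ j, mu y j • e j‖ ≤ ∑ j, ‖mu y j • e j‖ := norm_sum_le _ _
        _ = ∑ j, mu y j := by
            refine Finset.sum_congr rfl fun j _ => ?_
            rw [norm_smul, he j, mul_one, Real.norm_eq_abs, abs_of_nonneg (hmu0 y j)]
        _ = 1 := hmu1 y
  exact hsub hQ

/-- Linear functionals on `cut` are bounded by `SDP`. -/
lemma inner_le_SDP (k m₁ m₂ : ℕ) (M : Matrix (Fin m₁) (Fin m₂) ℝ)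
    {Y : Matrix (Fin m₁) (Fin m₂) ℝ} (hY : Y ∈ cut k m₁ m₂) :
    ∑ x, ∑ y, M x y * Y x y ≤ SDP k m₁ m₂ M := by
  let L : Matrix (Fin m₁) (Fin m₂) ℝ →ₗ[ℝ] ℝ :=
    { toFun := fun Y => ∑ x, ∑ y, M x y * Y x y
      map_add' := by
        intro A B
        simp only [Matrix.add_apply, mul_add]
        rw [← Finset.sum_add_distrib]
        exact Finset.sum_congr rfl fun x _ => by rw [← Finset.sum_add_distrib]
      map_smul' := by
        intro r A
        simp only [Matrix.smul_apply, smul_eq_mul, RingHom.id_apply]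
        rw [Finset.mul_sum]
        refine Finset.sum_congr rfl fun x _ => ?_
        rw [Finset.mul_sum]
        exact Finset.sum_congr rfl fun y _ => by ring }
  have hsub : cut k m₁ m₂ ⊆ L ⁻¹' (Set.Iic (SDP k m₁ m₂ M)) := by
    rw [cut_eq]
    refine convexHull_min ?_ ((convex_Iic _).linear_preimage L)
    rintro X ⟨c, e, hc, he, hX⟩
    have : L X ∈ sdpSet k m₁ m₂ M := by
      refine ⟨c, e, hc, he, ?_⟩
      show ∑ x, ∑ y, M x y * X x y = _
      exact Finset.sum_congr rfl fun x _ => Finset.sum_congr rfl fun y _ => by rw [hX]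
    exact le_csSup (bddAbove_sdpSet k m₁ m₂ M) this
  exact hsub hY

end ShrinkAux

open ShrinkAux in
/-- Proposition 1 of the paper: shrinking by the factors α, η_A, η_B maps
cut d into cut n, whence K_G(d→n) ≤ 1/(α η_A η_B). -/
theorem shrinking_upper_bound (d n m₁ m₂ : ℕ)
    (α ηA ηB : ℝ) (hα : α ∈ Set.Icc (0:ℝ) 1) (hηA : ηA ∈ Set.Icc (0:ℝ) 1)
    (hηB : ηB ∈ Set.Icc (0:ℝ) 1)
    (a : Fin m₁ → EuclideanSpace ℝ (Fin d)) (b : Fin m₂ → EuclideanSpace ℝ (Fin d))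
    (ha : ∀ x, ‖a x‖ = 1) (hb : ∀ y, ‖b y‖ = 1)
    (P : Matrix (Fin m₁) (Fin m₂) ℝ) (hP : ∀ x y, P x y = (inner ℝ (a x) (b y) : ℝ))
    (hA : ∀ v : EuclideanSpace ℝ (Fin d), ‖v‖ = ηA → v ∈ convexHull ℝ (Set.range a))
    (hB : ∀ w : EuclideanSpace ℝ (Fin d), ‖w‖ = ηB → w ∈ convexHull ℝ (Set.range b))
    (hαP : α • P ∈ cut n m₁ m₂)
    (N : Matrix (Fin m₁) (Fin m₂) ℝ) (hN : N ∈ cut d m₁ m₂) :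
    (α * ηA * ηB) • N ∈ cut n m₁ m₂ ∧
      ∀ M : Matrix (Fin m₁) (Fin m₂) ℝ,
        α * ηA * ηB * SDP d m₁ m₂ M ≤ SDP n m₁ m₂ M := by
  classical
  have hs0 : 0 ≤ α * ηA * ηB := mul_nonneg (mul_nonneg hα.1 hηA.1) hηB.1
  -- a generator of `cut n` exists
  obtain ⟨X₀, hX₀⟩ : (cutGen n m₁ m₂).Nonempty := by
    have h := hαP
    rw [cut_eq] at h
    exact convexHull_nonempty_iff.1 ⟨α • P, h⟩
  obtain ⟨c₀, e₀, hc₀, he₀, -⟩ := hX₀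
  -- main claim: shrinking maps cut d into cut n
  have claim : ∀ N' ∈ cut d m₁ m₂, (α * ηA * ηB) • N' ∈ cut n m₁ m₂ := by
    by_cases hm : m₁ = 0 ∧ m₂ = 0
    · intro N' _
      haveI : IsEmpty (Fin m₁) := by rw [hm.1]; infer_instance
      have hNP : (α * ηA * ηB) • N' = α • P := by
        ext x y
        exact (IsEmpty.false x).elim
      rw [hNP]
      exact hαP
    · have hu : ∃ u : EuclideanSpace ℝ (Fin n), ‖u‖ = 1 := by
        rcases Nat.eq_zero_or_pos m₁ with h1 | h1
        · rcases Nat.eq_zero_or_pos m₂ with h2 | h2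
          · exact absurd ⟨h1, h2⟩ hm
          · exact ⟨e₀ ⟨0, h2⟩, he₀ _⟩
        · exact ⟨c₀ ⟨0, h1⟩, hc₀ _⟩
      have hsub : cut d m₁ m₂ ⊆ (fun Q => (α * ηA * ηB) • Q) ⁻¹' (cut n m₁ m₂) := by
        rw [cut_eq]
        have hlin : IsLinearMap ℝ (fun Q : Matrix (Fin m₁) (Fin m₂) ℝ => (α * ηA * ηB) • Q) :=
          ⟨fun A B => smul_add _ A B, fun r A => smul_comm _ r A⟩
        refine convexHull_min ?_ ((convex_convexHull ℝ _).is_linear_preimage hlin)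
        rintro X ⟨u, v, hu', hv', hX⟩
        show (α * ηA * ηB) • X ∈ cut n m₁ m₂
        have hnA : ∀ x, ηA • u x ∈ convexHull ℝ (Set.range a) := fun x =>
          hA _ (by rw [norm_smul, hu' x, mul_one, Real.norm_eq_abs, abs_of_nonneg hηA.1])
        have hnB : ∀ y, ηB • v y ∈ convexHull ℝ (Set.range b) := fun y =>
          hB _ (by rw [norm_smul, hv' y, mul_one, Real.norm_eq_abs, abs_of_nonneg hηB.1])
        choose lam hlam0 hlam1 hlam using fun x => exists_weights a (ηA • u x) (hnA x)
        choose mu hmu0 hmu1 hmu using fun y => exists_weights b (ηB • v y) (hnB y)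
        have key : (α * ηA * ηB) • X =
            Matrix.of fun x y => ∑ i, ∑ j, lam x i * mu y j * ((α • P) i j) := by
          ext x y
          have h1 : (inner ℝ (ηA • u x) (ηB • v y) : ℝ) = ∑ i, ∑ j, lam x i * mu y j * P i j := by
            rw [← hlam x, ← hmu y, sum_inner]
            refine Finset.sum_congr rfl fun i _ => ?_
            rw [real_inner_smul_left, inner_sum, Finset.mul_sum]
            refine Finset.sum_congr rfl fun j _ => ?_
            rw [real_inner_smul_right, hP]
            ring
          have h2 : (inner ℝ (ηA • u x) (ηB • v y) : ℝ)
              = ηA * ηB * (inner ℝ (u x) (v y) : ℝ) := by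
            rw [real_inner_smul_left, real_inner_smul_right]; ring
          have h3 : ∑ i, ∑ j, lam x i * mu y j * ((α • P) i j)
              = α * ∑ i, ∑ j, lam x i * mu y j * P i j := by
            rw [Finset.mul_sum]
            refine Finset.sum_congr rfl fun i _ => ?_
            rw [Finset.mul_sum]
            refine Finset.sum_congr rfl fun j _ => ?_
            simp only [Matrix.smul_apply, smul_eq_mul]
            ring
          show (α * ηA * ηB) * X x y = ∑ i, ∑ j, lam x i * mu y j * ((α • P) i j)
          rw [h3, ← h1, h2, hX x y]
          ring
        rw [key]
        exact mixing hu lam mu hlam0 hlam1 hmu0 hmu1 hαP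
      intro N' hN'
      exact hsub hN'
  refine ⟨claim N hN, ?_⟩
  intro M
  rw [SDP_eq d m₁ m₂ M, SDP_eq n m₁ m₂ M]
  have hbn := bddAbove_sdpSet n m₁ m₂ M
  -- the sup over dimension n is nonnegative
  have hsupn : 0 ≤ sSup (sdpSet n m₁ m₂ M) := by
    have hr₀ : (∑ x, ∑ y, M x y * (inner ℝ (c₀ x) (e₀ y) : ℝ)) ∈ sdpSet n m₁ m₂ M :=
      ⟨c₀, e₀, hc₀, he₀, rfl⟩
    have hr₁ : (∑ x, ∑ y, M x y * (inner ℝ (-c₀ x) (e₀ y) : ℝ)) ∈ sdpSet n m₁ m₂ M :=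
      ⟨fun x => -c₀ x, e₀, fun x => by rw [norm_neg]; exact hc₀ x, he₀, rfl⟩
    have h1 := le_csSup hbn hr₀
    have h2 := le_csSup hbn hr₁
    have hneg : ∑ x, ∑ y, M x y * (inner ℝ (-c₀ x) (e₀ y) : ℝ)
        = -(∑ x, ∑ y, M x y * (inner ℝ (c₀ x) (e₀ y) : ℝ)) := by
      rw [← Finset.sum_neg_distrib]
      refine Finset.sum_congr rfl fun x _ => ?_
      rw [← Finset.sum_neg_distrib]
      refine Finset.sum_congr rfl fun y _ => ?_
      rw [inner_neg_left]
      ring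
    rw [hneg] at h2
    linarith
  have hkey : ∀ r ∈ sdpSet d m₁ m₂ M, α * ηA * ηB * r ≤ sSup (sdpSet n m₁ m₂ M) := by
    rintro r ⟨u, v, hu', hv', rfl⟩
    have hXgen : (Matrix.of fun x y => (inner ℝ (u x) (v y) : ℝ)) ∈ cut d m₁ m₂ :=
      subset_convexHull ℝ _ ⟨u, v, hu', hv', fun _ _ => rfl⟩
    have h := inner_le_SDP n m₁ m₂ M (claim _ hXgen)
    rw [SDP_eq n m₁ m₂ M] at h
    calc α * ηA * ηB * ∑ x, ∑ y, M x y * (inner ℝ (u x) (v y) : ℝ)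
        = ∑ x, ∑ y, M x y *
            (((α * ηA * ηB) • Matrix.of fun x y => (inner ℝ (u x) (v y) : ℝ)) x y) := by
          rw [Finset.mul_sum]
          refine Finset.sum_congr rfl fun x _ => ?_
          rw [Finset.mul_sum]
          refine Finset.sum_congr rfl fun y _ => ?_
          simp only [Matrix.smul_apply, Matrix.of_apply, smul_eq_mul]
          ring
      _ ≤ sSup (sdpSet n m₁ m₂ M) := h
  have hd_ne : (sdpSet d m₁ m₂ M).Nonempty :=
    ⟨_, a, b, ha, hb, rfl⟩
  rcases eq_or_lt_of_le hs0 with hs | hs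
  · rw [← hs, zero_mul]
    exact hsupn
  · have hle : sSup (sdpSet d m₁ m₂ M) ≤ sSup (sdpSet n m₁ m₂ M) / (α * ηA * ηB) :=
      csSup_le hd_ne fun r hr => (le_div_iff₀ hs).2 (by rw [mul_comm]; exact hkey r hr)
    calc α * ηA * ηB * sSup (sdpSet d m₁ m₂ M)
        ≤ α * ηA * ηB * (sSup (sdpSet n m₁ m₂ M) / (α * ηA * ηB)) :=
          mul_le_mul_of_nonneg_left hle hs0
      _ = sSup (sdpSet n m₁ m₂ M) := mul_div_cancel₀ _ hs.ne'
end

section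
/- For the 3×3 matrix M with M_{xy} = cos(2π(x−y)/3) (the Gram matrix of the hexagon/trine directions in the plane), SDP_2(M) = 9/2 and SDP_1(M) = 4, hence K_G(2) ≥ 9/8. -/
/-- The generalised Grothendieck constant `K_G(d → n)`, the supremum of the ratios
`SDP_d(M) / SDP_n(M)` over all real matrices `M` of all sizes. -/
noncomputable def KG (d n : ℕ) : ℝ :=
  sSup { r : ℝ | ∃ (m₁ m₂ : ℕ) (M : Matrix (Fin m₁) (Fin m₂) ℝ),
    0 < SDP n m₁ m₂ M ∧ r = SDP d m₁ m₂ M / SDP n m₁ m₂ M }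

open Real

private lemma cos23 : Real.cos (2 * π / 3) = -(1/2) := by
  have h : 2 * π / 3 = π - π/3 := by ring
  rw [h, Real.cos_pi_sub, Real.cos_pi_div_three]

private lemma cos43 : Real.cos (4 * π / 3) = -(1/2) := by
  have h : 4 * π / 3 = π/3 + π := by ring
  rw [h, Real.cos_add_pi, Real.cos_pi_div_three]

private lemma cosv (x y : Fin 3) :
    Real.cos (2 * π * ((x : ℝ) - (y : ℝ)) / 3) = if x = y then 1 else -(1/2) := by
  fin_cases x <;> fin_cases y <;> simp <;>
    first
    | (rw [show (-(2 * π) / 3 : ℝ) = -(2 * π / 3) by ring, Real.cos_neg, cos23]; norm_num)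
    | (rw [show (-(2 * π * 2) / 3 : ℝ) = -(4 * π / 3) by ring, Real.cos_neg, cos43]; norm_num)
    | (rw [cos23]; norm_num)
    | (rw [show (2 * π * ((1:ℝ) - 2)) / 3 = -(2 * π / 3) by ring, Real.cos_neg, cos23]; norm_num)
    | (rw [show (2 * π * (2:ℝ)) / 3 = 4 * π / 3 by ring, cos43]; norm_num)
    | (rw [show (2 * π * ((2:ℝ) - 1)) / 3 = 2 * π / 3 by ring, cos23]; norm_num)

private lemma sum_sq_eq_one {k : ℕ} (a : EuclideanSpace ℝ (Fin k)) (h : ‖a‖ = 1) :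
    ∑ i, (a i)^2 = 1 := by
  have h2 : (inner ℝ a a : ℝ) = ‖a‖ ^ 2 := real_inner_self_eq_norm_sq a
  rw [h, PiLp.inner_apply] at h2
  simpa [PiLp.inner_apply, RCLike.inner_apply, sq] using h2

private lemma abs_coord_le {k : ℕ} (a : EuclideanSpace ℝ (Fin k)) (h : ‖a‖ = 1) (i : Fin k) :
    |a i| ≤ 1 := by
  have hs := sum_sq_eq_one a h
  have h1 : (a i)^2 ≤ 1 := by
    rw [← hs]
    exact Finset.single_le_sum (fun j _ => sq_nonneg (a j)) (Finset.mem_univ i)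
  nlinarith [sq_abs (a i), abs_nonneg (a i)]

private lemma norm_const_one (v : EuclideanSpace ℝ (Fin 1)) (h : |v 0| = 1) :
    ‖v‖ = 1 := by
  have h2 := EuclideanSpace.norm_eq v
  refine h2.trans ?_
  rw [Fin.sum_univ_one]
  simp [Real.norm_eq_abs, sq_abs, h]

private lemma inner_one (a b : EuclideanSpace ℝ (Fin 1)) : (inner ℝ a b : ℝ) = a 0 * b 0 := by
  simp [PiLp.inner_apply, RCLike.inner_apply]
  ring

private lemma inner_two (a b : EuclideanSpace ℝ (Fin 2)) :
    (inner ℝ a b : ℝ) = a 0 * b 0 + a 1 * b 1 := by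
  simp [PiLp.inner_apply, RCLike.inner_apply, Fin.sum_univ_two]
  ring

private lemma sdp_bddAbove (k m₁ m₂ : ℕ) (M : Matrix (Fin m₁) (Fin m₂) ℝ) :
    BddAbove { r : ℝ | ∃ (a : Fin m₁ → EuclideanSpace ℝ (Fin k)) (b : Fin m₂ → EuclideanSpace ℝ (Fin k)),
      (∀ x, ‖a x‖ = 1) ∧ (∀ y, ‖b y‖ = 1) ∧
      r = ∑ x, ∑ y, M x y * (inner ℝ (a x) (b y) : ℝ) } := by
  refine ⟨∑ x, ∑ y, |M x y|, ?_⟩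
  rintro r ⟨a, b, ha, hb, rfl⟩
  refine Finset.sum_le_sum fun x _ => Finset.sum_le_sum fun y _ => ?_
  calc M x y * (inner ℝ (a x) (b y) : ℝ) ≤ |M x y * (inner ℝ (a x) (b y) : ℝ)| := le_abs_self _
    _ = |M x y| * |(inner ℝ (a x) (b y) : ℝ)| := abs_mul _ _
    _ ≤ |M x y| * 1 := by
        refine mul_le_mul_of_nonneg_left ?_ (abs_nonneg _)
        calc |(inner ℝ (a x) (b y) : ℝ)| ≤ ‖a x‖ * ‖b y‖ := abs_real_inner_le_norm _ _
          _ = 1 := by rw [ha x, hb y, one_mul]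
    _ = |M x y| := mul_one _

private lemma cube_le {m₁ m₂ : ℕ} (M : Matrix (Fin m₁) (Fin m₂) ℝ)
    (c : Fin m₁ → ℝ) (d : Fin m₂ → ℝ) (hc : ∀ x, |c x| ≤ 1) (hd : ∀ y, |d y| ≤ 1) :
    ∑ x, ∑ y, M x y * (c x * d y) ≤ SDP 1 m₁ m₂ M := by
  have key : ∀ (u : Fin m₁ → ℝ) (v : Fin m₂ → ℝ),
      ∑ x, ∑ y, M x y * (u x * v y) = ∑ x, u x * ∑ y, M x y * v y := by
    intro u v
    refine Finset.sum_congr rfl fun x _ => ?_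
    rw [Finset.mul_sum]
    exact Finset.sum_congr rfl fun y _ => by ring
  have key2 : ∀ (u : Fin m₁ → ℝ) (v : Fin m₂ → ℝ),
      ∑ x, ∑ y, M x y * (u x * v y) = ∑ y, v y * ∑ x, M x y * u x := by
    intro u v
    rw [Finset.sum_comm]
    refine Finset.sum_congr rfl fun y _ => ?_
    rw [Finset.mul_sum]
    exact Finset.sum_congr rfl fun x _ => by ring
  set g : Fin m₁ → ℝ := fun x => ∑ y, M x y * d y with hg
  set c' : Fin m₁ → ℝ := fun x => if 0 ≤ g x then 1 else -1 with hc'def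
  have hc'abs : ∀ x, |c' x| = 1 := by
    intro x; by_cases h : 0 ≤ g x <;> simp [hc'def, h]
  have step1 : ∑ x, ∑ y, M x y * (c x * d y) ≤ ∑ x, ∑ y, M x y * (c' x * d y) := by
    rw [key c d, key c' d]
    refine Finset.sum_le_sum fun x _ => ?_
    have h1 : c x * g x ≤ |g x| := by
      calc c x * g x ≤ |c x * g x| := le_abs_self _
        _ = |c x| * |g x| := abs_mul _ _
        _ ≤ 1 * |g x| := mul_le_mul_of_nonneg_right (hc x) (abs_nonneg _)
        _ = |g x| := one_mul _
    have h2 : c' x * g x = |g x| := by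
      by_cases h : 0 ≤ g x
      · simp [hc'def, h, abs_of_nonneg h]
      · simp [hc'def, h, abs_of_neg (lt_of_not_ge h)]
    linarith
  set h' : Fin m₂ → ℝ := fun y => ∑ x, M x y * c' x with hh'
  set d' : Fin m₂ → ℝ := fun y => if 0 ≤ h' y then 1 else -1 with hd'def
  have hd'abs : ∀ y, |d' y| = 1 := by
    intro y; by_cases h : 0 ≤ h' y <;> simp [hd'def, h]
  have step2 : ∑ x, ∑ y, M x y * (c' x * d y) ≤ ∑ x, ∑ y, M x y * (c' x * d' y) := by
    rw [key2 c' d, key2 c' d']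
    refine Finset.sum_le_sum fun y _ => ?_
    have h1 : d y * h' y ≤ |h' y| := by
      calc d y * h' y ≤ |d y * h' y| := le_abs_self _
        _ = |d y| * |h' y| := abs_mul _ _
        _ ≤ 1 * |h' y| := mul_le_mul_of_nonneg_right (hd y) (abs_nonneg _)
        _ = |h' y| := one_mul _
    have h2 : d' y * h' y = |h' y| := by
      by_cases h : 0 ≤ h' y
      · simp [hd'def, h, abs_of_nonneg h]
      · simp [hd'def, h, abs_of_neg (lt_of_not_ge h)]
    linarith
  have hmem : (∑ x, ∑ y, M x y * (c' x * d' y)) ∈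
      { r : ℝ | ∃ (a : Fin m₁ → EuclideanSpace ℝ (Fin 1)) (b : Fin m₂ → EuclideanSpace ℝ (Fin 1)),
        (∀ x, ‖a x‖ = 1) ∧ (∀ y, ‖b y‖ = 1) ∧
        r = ∑ x, ∑ y, M x y * (inner ℝ (a x) (b y) : ℝ) } := by
    refine ⟨fun x => WithLp.toLp 2 (fun _ => c' x), fun y => WithLp.toLp 2 (fun _ => d' y),
      fun x => norm_const_one _ (hc'abs x), fun y => norm_const_one _ (hd'abs y), ?_⟩
    refine Finset.sum_congr rfl fun x _ => Finset.sum_congr rfl fun y _ => ?_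
    rw [inner_one]
  exact (step1.trans step2).trans (le_csSup (sdp_bddAbove 1 m₁ m₂ M) hmem)

private lemma sdp2_le_two {m₁ m₂ : ℕ} (M : Matrix (Fin m₁) (Fin m₂) ℝ)
    (h1 : 0 < SDP 1 m₁ m₂ M) : SDP 2 m₁ m₂ M ≤ 2 * SDP 1 m₁ m₂ M := by
  refine Real.sSup_le ?_ (by linarith)
  rintro r ⟨a, b, ha, hb, rfl⟩
  have hsplit : ∑ x, ∑ y, M x y * (inner ℝ (a x) (b y) : ℝ) =
      (∑ x, ∑ y, M x y * (a x 0 * b y 0)) + (∑ x, ∑ y, M x y * (a x 1 * b y 1)) := by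
    rw [← Finset.sum_add_distrib]
    refine Finset.sum_congr rfl fun x _ => ?_
    rw [← Finset.sum_add_distrib]
    refine Finset.sum_congr rfl fun y _ => ?_
    rw [inner_two]; ring
  rw [hsplit]
  have A := cube_le M (fun x => a x 0) (fun y => b y 0)
    (fun x => abs_coord_le _ (ha x) 0) (fun y => abs_coord_le _ (hb y) 0)
  have B := cube_le M (fun x => a x 1) (fun y => b y 1)
    (fun x => abs_coord_le _ (ha x) 1) (fun y => abs_coord_le _ (hb y) 1)
  linarith

noncomputable def trine : Fin 3 → EuclideanSpace ℝ (Fin 2) :=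
  fun x => WithLp.toLp 2 ![Real.cos (2 * π * (x : ℝ) / 3), Real.sin (2 * π * (x : ℝ) / 3)]

set_option maxHeartbeats 1000000 in
private lemma trine_norm (x : Fin 3) : ‖trine x‖ = 1 := by
  have h2 := EuclideanSpace.norm_eq (trine x)
  refine h2.trans ?_
  rw [Fin.sum_univ_two]
  simp only [trine, PiLp.toLp_apply, Matrix.cons_val_zero, Matrix.cons_val_one, Matrix.head_cons,
    Real.norm_eq_abs, sq_abs]
  rw [Real.cos_sq_add_sin_sq, Real.sqrt_one]

set_option maxHeartbeats 1000000 in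
private lemma trine_inner (x y : Fin 3) :
    (inner ℝ (trine x) (trine y) : ℝ) = Real.cos (2 * π * ((x : ℝ) - (y : ℝ)) / 3) := by
  have hin : (inner ℝ (trine x) (trine y) : ℝ) = trine x 0 * trine y 0 + trine x 1 * trine y 1 :=
    inner_two _ _
  rw [hin]
  simp only [trine, PiLp.toLp_apply, Matrix.cons_val_zero, Matrix.cons_val_one, Matrix.head_cons]
  rw [← Real.cos_sub]
  congr 1
  ring

set_option maxHeartbeats 1000000 in
private lemma hex_val : (9/2 : ℝ) = ∑ x, ∑ y,
    (fun x y : Fin 3 => Real.cos (2 * Real.pi * ((x : ℝ) - (y : ℝ)) / 3)) x y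
      * (inner ℝ (trine x) (trine y) : ℝ) := by
  simp only [trine_inner, cosv, Fin.sum_univ_three, Fin.reduceEq, reduceIte, if_true, if_false]
  norm_num

noncomputable def sgn3 : Fin 3 → EuclideanSpace ℝ (Fin 1) :=
  fun x => WithLp.toLp 2 fun _ => if x = 2 then -1 else 1

set_option maxHeartbeats 1000000 in
private lemma sgn3_norm (x : Fin 3) : ‖sgn3 x‖ = 1 := by
  have h2 := EuclideanSpace.norm_eq (sgn3 x)
  refine h2.trans ?_
  rw [Fin.sum_univ_one]
  by_cases h : x = 2 <;> simp [sgn3, PiLp.toLp_apply, h]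

set_option maxHeartbeats 1000000 in
private lemma sgn3_val : (4 : ℝ) = ∑ x, ∑ y,
    (fun x y : Fin 3 => Real.cos (2 * Real.pi * ((x : ℝ) - (y : ℝ)) / 3)) x y
      * (inner ℝ (sgn3 x) (sgn3 y) : ℝ) := by
  have hin : ∀ x y : Fin 3, (inner ℝ (sgn3 x) (sgn3 y) : ℝ) = sgn3 x 0 * sgn3 y 0 := by
    intro x y; exact inner_one _ _
  simp only [hin]
  simp only [hin, cosv, Fin.sum_univ_three, Fin.reduceEq, reduceIte, if_true, if_false, sgn3, PiLp.toLp_apply]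
  norm_num

private lemma pm_of_sq (s : ℝ) (h : s^2 = 1) : s = 1 ∨ s = -1 := by
  have h2 : (s - 1) * (s + 1) = 0 := by nlinarith
  rcases mul_eq_zero.mp h2 with h3 | h3
  · left; linarith
  · right; linarith

set_option maxHeartbeats 1000000 in
private lemma sdp2_hex : SDP 2 3 3
    (fun x y : Fin 3 => Real.cos (2 * Real.pi * ((x : ℝ) - (y : ℝ)) / 3)) = 9 / 2 := by
  refine le_antisymm ?_ ?_
  · refine Real.sSup_le ?_ (by norm_num)
    rintro r ⟨a, b, ha, hb, rfl⟩
    have hA : ∀ x, (a x 0)^2 + (a x 1)^2 = 1 := by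
      intro x
      have := sum_sq_eq_one (a x) (ha x)
      rwa [Fin.sum_univ_two] at this
    have hB : ∀ y, (b y 0)^2 + (b y 1)^2 = 1 := by
      intro y
      have := sum_sq_eq_one (b y) (hb y)
      rwa [Fin.sum_univ_two] at this
    have hin : ∀ x y : Fin 3, (inner ℝ (a x) (b y) : ℝ) = a x 0 * b y 0 + a x 1 * b y 1 := by
      intro x y; exact inner_two _ _
    simp only [Fin.sum_univ_three, cosv, hin, Fin.reduceEq, reduceIte, if_true, if_false]
    norm_num
    nlinarith [hA 0, hA 1, hA 2, hB 0, hB 1, hB 2,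
      sq_nonneg (a 0 0 - b 0 0 - ((a 0 0 + a 1 0 + a 2 0) - (b 0 0 + b 1 0 + b 2 0))/3),
      sq_nonneg (a 1 0 - b 1 0 - ((a 0 0 + a 1 0 + a 2 0) - (b 0 0 + b 1 0 + b 2 0))/3),
      sq_nonneg (a 2 0 - b 2 0 - ((a 0 0 + a 1 0 + a 2 0) - (b 0 0 + b 1 0 + b 2 0))/3),
      sq_nonneg (a 0 1 - b 0 1 - ((a 0 1 + a 1 1 + a 2 1) - (b 0 1 + b 1 1 + b 2 1))/3),
      sq_nonneg (a 1 1 - b 1 1 - ((a 0 1 + a 1 1 + a 2 1) - (b 0 1 + b 1 1 + b 2 1))/3),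
      sq_nonneg (a 2 1 - b 2 1 - ((a 0 1 + a 1 1 + a 2 1) - (b 0 1 + b 1 1 + b 2 1))/3),
      sq_nonneg (a 0 0 + a 1 0 + a 2 0), sq_nonneg (a 0 1 + a 1 1 + a 2 1),
      sq_nonneg (b 0 0 + b 1 0 + b 2 0), sq_nonneg (b 0 1 + b 1 1 + b 2 1)]
  · exact le_csSup (sdp_bddAbove 2 3 3 _) ⟨trine, trine, trine_norm, trine_norm, hex_val⟩

set_option maxHeartbeats 1000000 in
private lemma sdp1_hex : SDP 1 3 3
    (fun x y : Fin 3 => Real.cos (2 * Real.pi * ((x : ℝ) - (y : ℝ)) / 3)) = 4 := by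
  refine le_antisymm ?_ ?_
  · refine Real.sSup_le ?_ (by norm_num)
    rintro r ⟨a, b, ha, hb, rfl⟩
    have hsq : ∀ (v : EuclideanSpace ℝ (Fin 1)), ‖v‖ = 1 → (v 0)^2 = 1 := by
      intro v h
      have := sum_sq_eq_one v h
      rwa [Fin.sum_univ_one] at this
    have hin : ∀ x y : Fin 3, (inner ℝ (a x) (b y) : ℝ) = a x 0 * b y 0 := by
      intro x y; exact inner_one _ _
    simp only [Fin.sum_univ_three, cosv, hin, Fin.reduceEq, reduceIte, if_true, if_false]
    rcases pm_of_sq _ (hsq _ (ha 0)) with h0 | h0 <;>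
    rcases pm_of_sq _ (hsq _ (ha 1)) with h1 | h1 <;>
    rcases pm_of_sq _ (hsq _ (ha 2)) with h2 | h2 <;>
    rcases pm_of_sq _ (hsq _ (hb 0)) with h3 | h3 <;>
    rcases pm_of_sq _ (hsq _ (hb 1)) with h4 | h4 <;>
    rcases pm_of_sq _ (hsq _ (hb 2)) with h5 | h5 <;>
    rw [h0, h1, h2, h3, h4, h5] <;> norm_num
  · exact le_csSup (sdp_bddAbove 1 3 3 _) ⟨sgn3, sgn3, sgn3_norm, sgn3_norm, sgn3_val⟩

theorem hexagon_bound :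
    SDP 2 3 3 (fun x y : Fin 3 => Real.cos (2 * Real.pi * ((x : ℝ) - (y : ℝ)) / 3)) = 9 / 2 ∧
    SDP 1 3 3 (fun x y : Fin 3 => Real.cos (2 * Real.pi * ((x : ℝ) - (y : ℝ)) / 3)) = 4 ∧
    9 / 8 ≤ KG 2 1 := by
  refine ⟨sdp2_hex, sdp1_hex, ?_⟩
  have hbdd : BddAbove { r : ℝ | ∃ (m₁ m₂ : ℕ) (M : Matrix (Fin m₁) (Fin m₂) ℝ),
      0 < SDP 1 m₁ m₂ M ∧ r = SDP 2 m₁ m₂ M / SDP 1 m₁ m₂ M } := by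
    refine ⟨2, ?_⟩
    rintro r ⟨m₁, m₂, M, h1, rfl⟩
    rw [div_le_iff₀ h1]
    have := sdp2_le_two M h1
    linarith
  have hmem : (9/8 : ℝ) ∈ { r : ℝ | ∃ (m₁ m₂ : ℕ) (M : Matrix (Fin m₁) (Fin m₂) ℝ),
      0 < SDP 1 m₁ m₂ M ∧ r = SDP 2 m₁ m₂ M / SDP 1 m₁ m₂ M } := by
    refine ⟨3, 3, (fun x y : Fin 3 => Real.cos (2 * Real.pi * ((x : ℝ) - (y : ℝ)) / 3)), ?_, ?_⟩
    · rw [sdp1_hex]; norm_num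
    · rw [sdp1_hex, sdp2_hex]; norm_num
  exact le_csSup hbdd hmem
end

section
/- For the 3×3 matrix A = M − (2/3)·I, where M_{xy} = cos(2π(x−y)/3), one has SDP_2(A) = 9/2 − 2 = 5/2 and SDP_1(A) = 2, hence K_G(2) ≥ 5/4. -/
namespace HexAux

def SDPSet (k m₁ m₂ : ℕ) (M : Matrix (Fin m₁) (Fin m₂) ℝ) : Set ℝ :=
  { r : ℝ | ∃ (a : Fin m₁ → EuclideanSpace ℝ (Fin k)) (b : Fin m₂ → EuclideanSpace ℝ (Fin k)),
    (∀ x, ‖a x‖ = 1) ∧ (∀ y, ‖b y‖ = 1) ∧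
    r = ∑ x, ∑ y, M x y * (inner ℝ (a x) (b y) : ℝ) }

lemma SDP_eq (k m₁ m₂ : ℕ) (M : Matrix (Fin m₁) (Fin m₂) ℝ) :
    SDP k m₁ m₂ M = sSup (SDPSet k m₁ m₂ M) := rfl

lemma coord_abs_le {k : ℕ} (x : EuclideanSpace ℝ (Fin k)) (i : Fin k) : |x i| ≤ ‖x‖ := by
  rw [EuclideanSpace.norm_eq, show |x i| = Real.sqrt (x i ^ 2) by rw [Real.sqrt_sq_eq_abs]]
  apply Real.sqrt_le_sqrt
  have : x i ^ 2 ≤ ∑ j, x j ^ 2 :=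
    Finset.single_le_sum (f := fun j => x j ^ 2) (fun j _ => sq_nonneg _) (Finset.mem_univ i)
  simpa [sq_abs] using this

lemma sdp_bdd (k m₁ m₂ : ℕ) (M : Matrix (Fin m₁) (Fin m₂) ℝ) :
    BddAbove (SDPSet k m₁ m₂ M) := by
  refine ⟨∑ x, ∑ y, |M x y|, ?_⟩
  rintro r ⟨a, b, ha, hb, rfl⟩
  refine Finset.sum_le_sum fun x _ => Finset.sum_le_sum fun y _ => ?_
  calc M x y * (inner ℝ (a x) (b y) : ℝ) ≤ |M x y * (inner ℝ (a x) (b y) : ℝ)| := le_abs_self _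
    _ = |M x y| * |(inner ℝ (a x) (b y) : ℝ)| := abs_mul _ _
    _ ≤ |M x y| * 1 := by
        have := abs_real_inner_le_norm (a x) (b y)
        rw [ha x, hb y] at this
        exact mul_le_mul_of_nonneg_left (by simpa using this) (abs_nonneg _)
    _ = |M x y| := mul_one _

lemma sdp_nonempty (k m₁ m₂ : ℕ) (hk : 0 < k) (M : Matrix (Fin m₁) (Fin m₂) ℝ) :
    (SDPSet k m₁ m₂ M).Nonempty := by
  refine ⟨_, fun _ => EuclideanSpace.single ⟨0, hk⟩ (1:ℝ),
    fun _ => EuclideanSpace.single ⟨0, hk⟩ (1:ℝ), fun _ => ?_, fun _ => ?_, rfl⟩ <;>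
  simp [EuclideanSpace.norm_single]

/-- sign vectors in `ℝ^1` -/
noncomputable def sv (r : ℝ) : EuclideanSpace ℝ (Fin 1) := EuclideanSpace.single 0 r

lemma sv_norm (r : ℝ) : ‖sv r‖ = |r| := by simp [sv, EuclideanSpace.norm_single]

lemma sv_inner (r t : ℝ) : (inner ℝ (sv r) (sv t) : ℝ) = r * t := by
  simp [sv, PiLp.inner_apply, RCLike.inner_apply]; ring

end HexAux

namespace HexAux

lemma abs_eq_self_mul_sign (c : ℝ) : |c| = c * (if 0 ≤ c then (1:ℝ) else -1) := by
  split_ifs with h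
  · rw [abs_of_nonneg h, mul_one]
  · rw [abs_of_neg (lt_of_not_ge h)]; ring

lemma mul_le_abs_of_abs_le_one {c v : ℝ} (hv : |v| ≤ 1) : c * v ≤ |c| := by
  calc c * v ≤ |c * v| := le_abs_self _
    _ = |c| * |v| := abs_mul _ _
    _ ≤ |c| * 1 := mul_le_mul_of_nonneg_left hv (abs_nonneg _)
    _ = |c| := mul_one _

lemma bilinear_le_SDP1 (m₁ m₂ : ℕ) (M : Matrix (Fin m₁) (Fin m₂) ℝ)
    (u : Fin m₁ → ℝ) (v : Fin m₂ → ℝ) (hu : ∀ x, |u x| ≤ 1) (hv : ∀ y, |v y| ≤ 1) :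
    ∑ x, ∑ y, M x y * (u x * v y) ≤ SDP 1 m₁ m₂ M := by
  set t : Fin m₂ → ℝ := fun y => if 0 ≤ ∑ x, M x y * u x then (1:ℝ) else -1 with ht
  set s : Fin m₁ → ℝ := fun x => if 0 ≤ ∑ y, M x y * t y then (1:ℝ) else -1 with hs
  have hts : ∀ y, t y = 1 ∨ t y = -1 := fun y => by by_cases h : 0 ≤ ∑ x, M x y * u x <;>
    simp [ht, h]
  have hss : ∀ x, s x = 1 ∨ s x = -1 := fun x => by by_cases h : 0 ≤ ∑ y, M x y * t y <;>
    simp [hs, h]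
  have habs : ∀ r : ℝ, r = 1 ∨ r = -1 → |r| ≤ 1 := by rintro r (rfl | rfl) <;> norm_num
  have step1 : ∑ x, ∑ y, M x y * (u x * v y) ≤ ∑ x, ∑ y, M x y * (u x * t y) := by
    rw [Finset.sum_comm, Finset.sum_comm (f := fun x y => M x y * (u x * t y))]
    refine Finset.sum_le_sum fun y _ => ?_
    have h1 : ∑ x, M x y * (u x * v y) = (∑ x, M x y * u x) * v y := by
      rw [Finset.sum_mul]; exact Finset.sum_congr rfl fun x _ => by ring
    have h2 : ∑ x, M x y * (u x * t y) = (∑ x, M x y * u x) * t y := by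
      rw [Finset.sum_mul]; exact Finset.sum_congr rfl fun x _ => by ring
    rw [h1, h2, ← abs_eq_self_mul_sign]
    exact mul_le_abs_of_abs_le_one (hv y)
  have step2 : ∑ x, ∑ y, M x y * (u x * t y) ≤ ∑ x, ∑ y, M x y * (s x * t y) := by
    refine Finset.sum_le_sum fun x _ => ?_
    have h1 : ∑ y, M x y * (u x * t y) = (∑ y, M x y * t y) * u x := by
      rw [Finset.sum_mul]; exact Finset.sum_congr rfl fun y _ => by ring
    have h2 : ∑ y, M x y * (s x * t y) = (∑ y, M x y * t y) * s x := by
      rw [Finset.sum_mul]; exact Finset.sum_congr rfl fun y _ => by ring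
    rw [h1, h2, ← abs_eq_self_mul_sign]
    exact mul_le_abs_of_abs_le_one (hu x)
  have step3 : ∑ x, ∑ y, M x y * (s x * t y) ∈ SDPSet 1 m₁ m₂ M := by
    refine ⟨fun x => sv (s x), fun y => sv (t y), fun x => ?_, fun y => ?_, ?_⟩
    · rw [sv_norm]; rcases hss x with h | h <;> rw [h] <;> norm_num
    · rw [sv_norm]; rcases hts y with h | h <;> rw [h] <;> norm_num
    · exact Finset.sum_congr rfl fun x _ => Finset.sum_congr rfl fun y _ => by rw [sv_inner]
  calc ∑ x, ∑ y, M x y * (u x * v y) ≤ ∑ x, ∑ y, M x y * (s x * t y) := le_trans step1 step2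
    _ ≤ SDP 1 m₁ m₂ M := le_csSup (sdp_bdd 1 m₁ m₂ M) step3

end HexAux



namespace HexAux

lemma SDP2_le (m₁ m₂ : ℕ) (M : Matrix (Fin m₁) (Fin m₂) ℝ) :
    SDP 2 m₁ m₂ M ≤ 2 * SDP 1 m₁ m₂ M := by
  rw [SDP_eq]
  refine csSup_le (sdp_nonempty 2 m₁ m₂ (by norm_num) M) ?_
  rintro r ⟨a, b, ha, hb, rfl⟩
  have key : ∑ x, ∑ y, M x y * (inner ℝ (a x) (b y) : ℝ)
      = ∑ i : Fin 2, ∑ x, ∑ y, M x y * (a x i * b y i) := by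
    rw [Finset.sum_comm (f := fun i x => ∑ y, M x y * (a x i * b y i))]
    refine Finset.sum_congr rfl fun x _ => ?_
    rw [Finset.sum_comm (f := fun i y => M x y * (a x i * b y i))]
    refine Finset.sum_congr rfl fun y _ => ?_
    rw [PiLp.inner_apply]
    simp only [RCLike.inner_apply, conj_trivial]
    rw [Finset.mul_sum]
    exact Finset.sum_congr rfl fun i _ => by ring
  rw [key, Fin.sum_univ_two]
  have h0 := bilinear_le_SDP1 m₁ m₂ M (fun x => a x 0) (fun y => b y 0)
    (fun x => by rw [← ha x]; exact coord_abs_le (a x) 0)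
    (fun y => by rw [← hb y]; exact coord_abs_le (b y) 0)
  have h1 := bilinear_le_SDP1 m₁ m₂ M (fun x => a x 1) (fun y => b y 1)
    (fun x => by rw [← ha x]; exact coord_abs_le (a x) 1)
    (fun y => by rw [← hb y]; exact coord_abs_le (b y) 1)
  linarith

lemma KG_bdd : BddAbove { r : ℝ | ∃ (m₁ m₂ : ℕ) (M : Matrix (Fin m₁) (Fin m₂) ℝ),
    0 < SDP 1 m₁ m₂ M ∧ r = SDP 2 m₁ m₂ M / SDP 1 m₁ m₂ M } := by
  refine ⟨2, ?_⟩
  rintro r ⟨m₁, m₂, M, h1, rfl⟩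
  rw [div_le_iff₀ h1]
  linarith [SDP2_le m₁ m₂ M]

end HexAux

namespace HexAux

set_option maxHeartbeats 1000000 in
lemma SDP1_val (A : Matrix (Fin 3) (Fin 3) ℝ)
    (hA : ∀ x y, A x y = if x = y then 1/3 else -(1/2)) : SDP 1 3 3 A = 2 := by
  rw [SDP_eq]
  apply le_antisymm
  · refine csSup_le (sdp_nonempty 1 3 3 one_pos A) ?_
    rintro r ⟨a, b, ha, hb, rfl⟩
    have hsq : ∀ (c : EuclideanSpace ℝ (Fin 1)), ‖c‖ = 1 → c 0 = 1 ∨ c 0 = -1 := by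
      intro c hc
      have h2 : ‖c‖ ^ 2 = 1 := by rw [hc]; norm_num
      rw [EuclideanSpace.norm_eq, Real.sq_sqrt (by positivity)] at h2
      have : c 0 * c 0 = 1 := by
        have := h2
        simp only [Fin.sum_univ_one, Real.norm_eq_abs, sq_abs] at this
        nlinarith
      exact mul_self_eq_one_iff.mp this
    have hin : ∀ x y, (inner ℝ (a x) (b y) : ℝ) = a x 0 * b y 0 := by
      intro x y
      simp [PiLp.inner_apply, RCLike.inner_apply, Fin.sum_univ_one]; ring
    simp only [hin, hA, Fin.sum_univ_three]
    norm_num [Fin.ext_iff]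
    rcases hsq (a 0) (ha 0) with h0 | h0 <;> rcases hsq (a 1) (ha 1) with h1 | h1 <;>
      rcases hsq (a 2) (ha 2) with h2 | h2 <;> rcases hsq (b 0) (hb 0) with h3 | h3 <;>
      rcases hsq (b 1) (hb 1) with h4 | h4 <;> rcases hsq (b 2) (hb 2) with h5 | h5 <;>
      simp only [h0, h1, h2, h3, h4, h5] <;> norm_num [Fin.ext_iff]
  · apply le_csSup (sdp_bdd 1 3 3 A)
    refine ⟨fun x => sv (![1, 1, -1] x), fun y => sv (![1, 1, -1] y), ?_, ?_, ?_⟩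
    · intro x; rw [sv_norm]; fin_cases x <;> norm_num
    · intro y; rw [sv_norm]; fin_cases y <;> norm_num
    · simp only [sv_inner, hA, Fin.sum_univ_three]
      norm_num [Fin.ext_iff, Matrix.cons_val_two, Matrix.tail_cons, Matrix.head_cons]

end HexAux

namespace HexAux

noncomputable def hc : Fin 3 → ℝ := fun x => if x = 0 then 1 else -(1/2)

noncomputable def hsn : Fin 3 → ℝ := fun x =>
  if x = 0 then 0 else if x = 1 then Real.sqrt 3 / 2 else -(Real.sqrt 3 / 2)

noncomputable def hex : Fin 3 → EuclideanSpace ℝ (Fin 2) := fun x =>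
  (WithLp.equiv 2 (Fin 2 → ℝ)).symm (fun i => if i = 0 then hc x else hsn x)

lemma hex_0 (x : Fin 3) : hex x 0 = hc x := rfl
lemma hex_1 (x : Fin 3) : hex x 1 = hsn x := rfl

lemma hs3 : Real.sqrt 3 ^ 2 = 3 := Real.sq_sqrt (by norm_num)

lemma hex_norm (x : Fin 3) : ‖hex x‖ = 1 := by
  rw [EuclideanSpace.norm_eq, Fin.sum_univ_two]
  have h : ‖hex x 0‖ ^ 2 + ‖hex x 1‖ ^ 2 = 1 := by
    simp only [Real.norm_eq_abs, sq_abs, hex_0, hex_1]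
    fin_cases x <;> norm_num [hc, hsn, Fin.ext_iff] <;> linear_combination (1/4 : ℝ) * hs3
  rw [h, Real.sqrt_one]

lemma hex_inner (x y : Fin 3) :
    (inner ℝ (hex x) (hex y) : ℝ) = if x = y then 1 else -(1/2) := by
  have h : (inner ℝ (hex x) (hex y) : ℝ) = hex x 0 * hex y 0 + hex x 1 * hex y 1 := by
    simp [PiLp.inner_apply, RCLike.inner_apply, Fin.sum_univ_two]; ring
  rw [h, hex_0, hex_1, hex_0, hex_1]
  fin_cases x <;> fin_cases y <;> norm_num [hc, hsn, Fin.ext_iff] <;>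
    first
      | linear_combination (1/4 : ℝ) * hs3
      | linear_combination (-1/4 : ℝ) * hs3

set_option maxHeartbeats 1000000 in
lemma SDP2_val (A : Matrix (Fin 3) (Fin 3) ℝ)
    (hA : ∀ x y, A x y = if x = y then 1/3 else -(1/2)) : SDP 2 3 3 A = 5/2 := by
  rw [SDP_eq]
  apply le_antisymm
  · refine csSup_le (sdp_nonempty 2 3 3 (by norm_num) A) ?_
    rintro r ⟨a, b, ha, hb, rfl⟩
    have hn : ∀ (c : EuclideanSpace ℝ (Fin 2)), ‖c‖ = 1 → c 0 ^ 2 + c 1 ^ 2 = 1 := by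
      intro c hc
      have h2 : ‖c‖ ^ 2 = 1 := by rw [hc]; norm_num
      rw [EuclideanSpace.norm_eq, Real.sq_sqrt (by positivity)] at h2
      simpa [Fin.sum_univ_two, Real.norm_eq_abs, sq_abs] using h2
    have hin : ∀ x y, (inner ℝ (a x) (b y) : ℝ) = a x 0 * b y 0 + a x 1 * b y 1 := by
      intro x y
      simp [PiLp.inner_apply, RCLike.inner_apply, Fin.sum_univ_two]; ring
    simp only [hin, hA, Fin.sum_univ_three]
    norm_num [Fin.ext_iff]
    have e0 := hn (a 0) (ha 0)
    have e1 := hn (a 1) (ha 1)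
    have e2 := hn (a 2) (ha 2)
    have f0 := hn (b 0) (hb 0)
    have f1 := hn (b 1) (hb 1)
    have f2 := hn (b 2) (hb 2)
    nlinarith [sq_nonneg (a 0 0 - a 1 0 - b 0 0 + b 1 0),
      sq_nonneg (a 0 0 - a 2 0 - b 0 0 + b 2 0),
      sq_nonneg (a 1 0 - a 2 0 - b 1 0 + b 2 0),
      sq_nonneg (a 0 0 + a 1 0 + a 2 0 + b 0 0 + b 1 0 + b 2 0),
      sq_nonneg (a 0 0 + a 1 0 + a 2 0), sq_nonneg (b 0 0 + b 1 0 + b 2 0),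
      sq_nonneg (a 0 1 - a 1 1 - b 0 1 + b 1 1),
      sq_nonneg (a 0 1 - a 2 1 - b 0 1 + b 2 1),
      sq_nonneg (a 1 1 - a 2 1 - b 1 1 + b 2 1),
      sq_nonneg (a 0 1 + a 1 1 + a 2 1 + b 0 1 + b 1 1 + b 2 1),
      sq_nonneg (a 0 1 + a 1 1 + a 2 1), sq_nonneg (b 0 1 + b 1 1 + b 2 1),
      e0, e1, e2, f0, f1, f2]
  · apply le_csSup (sdp_bdd 2 3 3 A)
    refine ⟨hex, hex, hex_norm, hex_norm, ?_⟩
    simp only [hex_inner, hA, Fin.sum_univ_three]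
    norm_num [Fin.ext_iff]

end HexAux

open Real

theorem hexagon_diagonal_modification_bound
    (M : Matrix (Fin 3) (Fin 3) ℝ)
    (hM : ∀ x y, M x y = Real.cos (2 * Real.pi * ((x : ℝ) - (y : ℝ)) / 3)) :
    SDP 2 3 3 (M - (2 / 3 : ℝ) • (1 : Matrix (Fin 3) (Fin 3) ℝ)) = 5 / 2 ∧
    SDP 1 3 3 (M - (2 / 3 : ℝ) • (1 : Matrix (Fin 3) (Fin 3) ℝ)) = 2 ∧
    5 / 4 ≤ KG 2 1 := by
  have hA : ∀ x y, (M - (2 / 3 : ℝ) • (1 : Matrix (Fin 3) (Fin 3) ℝ)) x y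
      = if x = y then 1/3 else -(1/2) := by
    have c1 : Real.cos (π * (2/3)) = -1/2 := by
      rw [show (π * (2/3) : ℝ) = π - π/3 by ring, Real.cos_pi_sub, Real.cos_pi_div_three]
      norm_num
    have c2 : Real.cos (π * (4/3)) = -1/2 := by
      rw [show (π * (4/3) : ℝ) = π + π/3 by ring, Real.cos_add]
      simp [Real.cos_pi_div_three]
      norm_num
    have c3 : Real.cos (π * (-2/3)) = -1/2 := by
      rw [show (π * (-2/3) : ℝ) = -(π * (2/3)) by ring, Real.cos_neg, c1]
    have c4 : Real.cos (π * (-4/3)) = -1/2 := by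
      rw [show (π * (-4/3) : ℝ) = -(π * (4/3)) by ring, Real.cos_neg, c2]
    intro x y
    simp only [Matrix.sub_apply, Matrix.smul_apply, Matrix.one_apply, hM]
    fin_cases x <;> fin_cases y <;> norm_num [Fin.ext_iff] <;> ring_nf <;>
      simp [c1, c2, c3, c4]
  have h2 := HexAux.SDP2_val _ hA
  have h1 := HexAux.SDP1_val _ hA
  refine ⟨h2, h1, ?_⟩
  have hmem : (5/4 : ℝ) ∈ { r : ℝ | ∃ (m₁ m₂ : ℕ) (M : Matrix (Fin m₁) (Fin m₂) ℝ),
      0 < SDP 1 m₁ m₂ M ∧ r = SDP 2 m₁ m₂ M / SDP 1 m₁ m₂ M } := by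
    refine ⟨3, 3, M - (2 / 3 : ℝ) • (1 : Matrix (Fin 3) (Fin 3) ℝ), ?_, ?_⟩
    · rw [h1]; norm_num
    · rw [h1, h2]; norm_num
  exact le_csSup HexAux.KG_bdd hmem
end
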